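/- arXiv:2505.13274 — 2 statements merged into one kernel-verified Lean document; each statement's English description precedes it below -/
import Mathlib

section
/- Let {η_k} be a sequence of identically distributed real random variables with E[|η_1|^p] < ∞ for some p > 0. Let (ν_t)_{t≥0} be a family of nonnegative-integer-valued random variables, (a_t)_{t≥0} a positive family diverging to +∞, and θ > 0 a constant such that ν_t/a_t converges in probability to θ as t → ∞. Then max_{k=1,...,ν_t} η_k / a_t^{1/p} converges in probability to 0 as t → ∞. -/
open MeasureTheory Filter Set Topology
open scoped ENNReal

/-- For identically distributed `η_k` with finite `p`-th absolute moment and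
integer random indices `ν_t` with `ν_t / a_t → θ > 0` in probability (`a_t → ∞`),
the maximum `max_{k=1,...,ν_t} η_k / a_t^{1/p}` tends to `0` in probability.
The maximum over an empty index set is `0` (convention of `sSup ∅ = 0` in `ℝ`). -/
theorem stmt0 {Ω : Type} [MeasurableSpace Ω] (P : Measure Ω) [IsProbabilityMeasure P]
    (η : ℕ → Ω → ℝ) (hmeas : ∀ k, Measurable (η k))
    (hident : ∀ k, 1 ≤ k → Measure.map (η k) P = Measure.map (η 1) P)
    (p : ℝ) (hp : 0 < p)
    (hmom : Integrable (fun ω => |η 1 ω| ^ p) P)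
    (ν : ℝ → Ω → ℕ) (hν : ∀ t, Measurable (ν t))
    (a : ℝ → ℝ) (ha : ∀ t, 0 < a t) (hatop : Tendsto a atTop atTop)
    (θ : ℝ) (hθ : 0 < θ)
    (hconv : ∀ ε > (0:ℝ),
      Tendsto (fun t => P {ω | ε < |(ν t ω : ℝ) / a t - θ|}) atTop (𝓝 0)) :
    ∀ ε > (0:ℝ),
      Tendsto (fun t => P {ω | ε < |(⨆ k ∈ Finset.Icc 1 (ν t ω), η k ω) / a t ^ (1 / p)|})
        atTop (𝓝 0) := by
  intro ε hε
  have hεp : (0:ℝ) < ε ^ p := Real.rpow_pos_of_pos hε p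
  set X : Ω → ℝ≥0∞ := fun ω => ENNReal.ofReal (|η 1 ω| ^ p) with hX
  have hXmeas : Measurable X :=
    ENNReal.measurable_ofReal.comp ((Real.continuous_rpow_const hp.le).measurable.comp (hmeas 1).abs)
  have hXfin : ∫⁻ ω, X ω ∂P ≠ ⊤ := by
    have h0 : 0 ≤ᵐ[P] fun ω => |η 1 ω| ^ p :=
      Filter.Eventually.of_forall fun ω => Real.rpow_nonneg (abs_nonneg _) p
    exact ((hasFiniteIntegral_iff_ofReal h0).mp hmom.hasFiniteIntegral).ne
  set c : ℝ → ℝ≥0∞ := fun t => ENNReal.ofReal (ε ^ p * a t) with hc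
  set G : ℝ → ℝ≥0∞ := fun t => ∫⁻ ω, ({ω' | c t < X ω'}).indicator X ω ∂P with hG
  set q : ℝ → ℝ≥0∞ := fun t => P {ω | c t < X ω} with hq
  set n : ℝ → ℕ := fun t => ⌈2 * θ * a t⌉₊ with hn
  -- the tail integral tends to 0
  have hGtendsto : Tendsto G atTop (𝓝 0) := by
    have hmeas' : ∀ t : ℝ, Measurable fun ω => ({ω' | c t < X ω'}).indicator X ω :=
      fun t => hXmeas.indicator (measurableSet_lt measurable_const hXmeas)
    have h := tendsto_lintegral_filter_of_dominated_convergence (μ := P) (l := (atTop : Filter ℝ))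
      (F := fun t ω => ({ω' | c t < X ω'}).indicator X ω) (f := fun _ => (0:ℝ≥0∞)) X
      (Eventually.of_forall hmeas')
      (Eventually.of_forall fun t => ae_of_all _ fun ω => Set.indicator_le_self _ _ ω)
      hXfin ?_
    · simpa using h
    · refine ae_of_all _ fun ω => ?_
      have h2 : ∀ᶠ t in atTop, |η 1 ω| ^ p ≤ ε ^ p * a t :=
        (hatop.const_mul_atTop hεp).eventually_ge_atTop _
      have h1 : ∀ᶠ t in atTop, ({ω' | c t < X ω'}).indicator X ω = 0 := by
        filter_upwards [h2] with t ht
        apply Set.indicator_of_notMem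
        simp only [Set.mem_setOf_eq, not_lt, hX, hc]
        exact ENNReal.ofReal_le_ofReal ht
      exact Tendsto.congr' (EventuallyEq.symm h1) tendsto_const_nhds
  -- Markov inequality for the tail
  have hMarkov : ∀ t, c t * q t ≤ G t := by
    intro t
    have hs : MeasurableSet {ω | c t < X ω} := measurableSet_lt measurable_const hXmeas
    calc c t * q t = ∫⁻ ω, ({ω' | c t < X ω'}).indicator (fun _ => c t) ω ∂P := by
          rw [lintegral_indicator_const hs]
      _ ≤ G t := by
          refine lintegral_mono fun ω => ?_
          by_cases hω : ω ∈ {ω' | c t < X ω'}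
          · rw [Set.indicator_of_mem hω, Set.indicator_of_mem hω]
            exact le_of_lt hω
          · rw [Set.indicator_of_notMem hω, Set.indicator_of_notMem hω]
  -- identical distribution
  have hqk : ∀ t : ℝ, ∀ k, 1 ≤ k →
      P {ω | c t < ENNReal.ofReal (|η k ω| ^ p)} = q t := by
    intro t k hk
    have hS : MeasurableSet {x : ℝ | c t < ENNReal.ofReal (|x| ^ p)} :=
      measurableSet_lt measurable_const
        (ENNReal.measurable_ofReal.comp ((Real.continuous_rpow_const hp.le).measurable.comp measurable_abs))
    have h2 := congrArg (fun μ : Measure ℝ => μ {x : ℝ | c t < ENNReal.ofReal (|x| ^ p)})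
      (hident k hk)
    simpa only [Measure.map_apply (hmeas k) hS, Measure.map_apply (hmeas 1) hS, Set.preimage_setOf_eq] using h2
  -- inclusion of events
  have hsub : ∀ t, {ω | ε < |(⨆ k ∈ Finset.Icc 1 (ν t ω), η k ω) / a t ^ (1 / p)|}
      ⊆ {ω | θ < |(ν t ω : ℝ) / a t - θ|} ∪
        ⋃ k ∈ Finset.Icc 1 (n t), {ω | c t < ENNReal.ofReal (|η k ω| ^ p)} := by
    intro t ω hω
    by_cases hA : θ < |(ν t ω : ℝ) / a t - θ|
    · exact Or.inl hA
    · right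
      push_neg at hA
      have hν2 : (ν t ω : ℝ) ≤ 2 * θ * a t := by
        have h1 : (ν t ω : ℝ) / a t - θ ≤ θ := (abs_le.mp hA).2
        have h2 : (ν t ω : ℝ) / a t ≤ 2 * θ := by linarith
        have := (div_le_iff₀ (ha t)).mp h2
        linarith
      have hνn : ν t ω ≤ n t := by
        have : (ν t ω : ℝ) ≤ (n t : ℝ) := hν2.trans (Nat.le_ceil _)
        exact_mod_cast this
      set s := Finset.Icc 1 (ν t ω) with hsdef
      set g : ℕ → ℝ := fun k => ⨆ _ : k ∈ s, η k ω with hg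
      have hA0 : (0:ℝ) < a t ^ (1/p) := Real.rpow_pos_of_pos (ha t) _
      have hM0 : (0:ℝ) < ε * a t ^ (1/p) := mul_pos hε hA0
      have hbdd : BddAbove (Set.range g) := by
        apply Set.Finite.bddAbove
        apply Set.Finite.subset (Set.Finite.insert 0 ((s.finite_toSet).image fun k => η k ω))
        rintro x ⟨k, rfl⟩
        by_cases hks : k ∈ s
        · right
          rw [hg]
          simp only [ciSup_pos hks]
          exact ⟨k, hks, rfl⟩
        · left
          haveI : IsEmpty (k ∈ s) := ⟨hks⟩
          rw [hg]
          simp only [Real.iSup_of_isEmpty]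
      have hg0 : g 0 = 0 := by
        haveI : IsEmpty ((0:ℕ) ∈ s) := ⟨by simp [hsdef]⟩
        rw [hg]
        simp only [Real.iSup_of_isEmpty]
      have hsup0 : 0 ≤ ⨆ k, g k := hg0 ▸ le_ciSup hbdd 0
      have hgle : ∀ M : ℝ, 0 ≤ M → (∀ k ∈ s, η k ω ≤ M) → ∀ k, g k ≤ M := by
        intro M hM h k
        by_cases hks : k ∈ s
        · rw [hg]; simp only [ciSup_pos hks]; exact h k hks
        · haveI : IsEmpty (k ∈ s) := ⟨hks⟩
          rw [hg]; simp only [Real.iSup_of_isEmpty]; exact hM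
      have hSg : (⨆ k ∈ s, η k ω) = ⨆ k, g k := rfl
      have hω' : ε < |(⨆ k ∈ s, η k ω) / a t ^ (1/p)| := hω
      rw [hSg, abs_div, abs_of_nonneg hsup0, abs_of_pos hA0, lt_div_iff₀ hA0] at hω'
      -- so the sup exceeds ε * a t ^ (1/p); find a witness
      have hex : ∃ k ∈ s, ε * a t ^ (1/p) < η k ω := by
        by_contra hcon
        push_neg at hcon
        have := ciSup_le (fun k => hgle _ hM0.le hcon k)
        exact absurd hω' (not_lt.mpr this)
      obtain ⟨k, hks, hk⟩ := hex
      have hk1 : 1 ≤ k := (Finset.mem_Icc.mp hks).1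
      have hkn : k ≤ n t := le_trans (Finset.mem_Icc.mp hks).2 hνn
      refine Set.mem_biUnion (Finset.mem_Icc.mpr ⟨hk1, hkn⟩) ?_
      have habs : ε * a t ^ (1/p) < |η k ω| := hk.trans_le (le_abs_self _)
      have hpow : ε ^ p * a t < |η k ω| ^ p := by
        have h1 : (ε * a t ^ (1/p)) ^ p < |η k ω| ^ p :=
          Real.rpow_lt_rpow hM0.le habs hp
        have h2 : (ε * a t ^ (1/p)) ^ p = ε ^ p * a t := by
          rw [Real.mul_rpow hε.le hA0.le, ← Real.rpow_mul (ha t).le,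
            one_div_mul_cancel hp.ne', Real.rpow_one]
        linarith [h1, h2.symm.trans_lt h1]
      show c t < ENNReal.ofReal (|η k ω| ^ p)
      rw [hc]
      exact (ENNReal.ofReal_lt_ofReal_iff_of_nonneg
        (mul_nonneg hεp.le (ha t).le)).mpr hpow
  -- measure bound
  have hbound : ∀ t, P {ω | ε < |(⨆ k ∈ Finset.Icc 1 (ν t ω), η k ω) / a t ^ (1 / p)|}
      ≤ P {ω | θ < |(ν t ω : ℝ) / a t - θ|} + (n t : ℝ≥0∞) * q t := by
    intro t
    refine (measure_mono (hsub t)).trans ((measure_union_le _ _).trans ?_)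
    gcongr
    refine (measure_biUnion_finset_le _ _).trans ?_
    rw [Finset.sum_congr rfl fun k hk => hqk t k (Finset.mem_Icc.mp hk).1]
    simp [Finset.sum_const, Nat.card_Icc, mul_comm]
  -- eventual comparison
  have hev : ∀ᶠ t in atTop, (n t : ℝ≥0∞) * q t ≤ ENNReal.ofReal (3 * θ / ε ^ p) * G t := by
    have h1 : ∀ᶠ t in atTop, 1 ≤ θ * a t :=
      (hatop.const_mul_atTop hθ).eventually_ge_atTop 1
    filter_upwards [h1] with t ht
    have hn3 : (n t : ℝ) ≤ 3 * θ * a t := by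
      have hceil : (n t : ℝ) < 2 * θ * a t + 1 :=
        Nat.ceil_lt_add_one (mul_nonneg (by linarith) (ha t).le)
      nlinarith
    calc (n t : ℝ≥0∞) * q t ≤ ENNReal.ofReal (3 * θ / ε ^ p) * (c t * q t) := by
          rw [← mul_assoc]
          gcongr
          rw [hc, ← ENNReal.ofReal_mul (by positivity), ← ENNReal.ofReal_natCast]
          apply ENNReal.ofReal_le_ofReal
          calc (n t : ℝ) ≤ 3 * θ * a t := hn3
            _ = 3 * θ / ε ^ p * (ε ^ p * a t) := by field_simp
      _ ≤ ENNReal.ofReal (3 * θ / ε ^ p) * G t := by gcongr; exact hMarkov t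
  -- conclude by squeezing
  have h2 : Tendsto (fun t => ENNReal.ofReal (3 * θ / ε ^ p) * G t) atTop (𝓝 0) := by
    simpa using ENNReal.Tendsto.const_mul hGtendsto (Or.inr ENNReal.ofReal_ne_top)
  have hupper : Tendsto (fun t => P {ω | θ < |(ν t ω : ℝ) / a t - θ|} +
      ENNReal.ofReal (3 * θ / ε ^ p) * G t) atTop (𝓝 0) := by
    simpa using (hconv θ hθ).add h2
  refine tendsto_of_tendsto_of_tendsto_of_le_of_le' tendsto_const_nhds hupper
    (Eventually.of_forall fun t => zero_le) ?_
  filter_upwards [hev] with t ht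
  exact (hbound t).trans (add_le_add le_rfl ht)
end

section
/- Let (V̂, S) be a Markov renewal process on a finite state space 𝒱 with irreducible aperiodic embedded chain, with V̂_0 distributed according to the invariant measure π. Then for any measurable f : 𝒱 × [0,∞) → ℝ, the stationary sequence {f(V̂_{k−1}, S_k − S_{k−1})}_{k≥1} is φ-mixing with φ_n = K ρ^{n−1} for some constant K > 0 and ρ ∈ [0,1). -/
open MeasureTheory ProbabilityTheory Filter Set Topology

/-- A time-homogeneous Markov renewal process `(V̂, S)` on a finite state space `𝒱`:
`Q v w t = P{V̂_{k+1} = w, S_{k+1} − S_k ≤ t | V̂_k = v}`, where the Markov renewal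
property is expressed by conditioning on arbitrary events of the natural filtration
contained in `{V̂_k = v}`. -/
structure MarkovRenewal (Ω : Type) [MeasurableSpace Ω] (P : Measure Ω)
    (𝒱 : Type) [Fintype 𝒱] [DecidableEq 𝒱] [MeasurableSpace 𝒱]
    [MeasurableSingletonClass 𝒱] where
  V : ℕ → Ω → 𝒱
  S : ℕ → Ω → ℝ
  Q : 𝒱 → 𝒱 → ℝ → ℝ
  measV : ∀ k, Measurable (V k)
  measS : ∀ k, Measurable (S k)
  S_zero : ∀ ω, S 0 ω = 0
  S_lt : ∀ ω k, S k ω < S (k + 1) ω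
  markov : ∀ (k : ℕ) (v w : 𝒱) (t : ℝ) (A : Set Ω),
    MeasurableSet[MeasurableSpace.comap
      (fun ω => fun i : Fin (k + 1) => (V i ω, S i ω)) inferInstance] A →
    A ⊆ {ω | V k ω = v} →
    (P (A ∩ {ω | V (k + 1) ω = w ∧ S (k + 1) ω - S k ω ≤ t})).toReal
      = (P A).toReal * Q v w t

section
variable {Ω : Type} [MeasurableSpace Ω] {P : Measure Ω}
  {𝒱 : Type} [Fintype 𝒱] [DecidableEq 𝒱] [MeasurableSpace 𝒱]
  [MeasurableSingletonClass 𝒱]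

/-- Transition matrix of the embedded Markov chain: `p v w = lim_{t→∞} Q v w t`. -/
def MarkovRenewal.IsTransitionMatrix (M : MarkovRenewal Ω P 𝒱) (p : 𝒱 → 𝒱 → ℝ) : Prop :=
  ∀ v w, Tendsto (M.Q v w) atTop (𝓝 (p v w))

/-- Irreducibility of the embedded chain. -/
def Irred (p : 𝒱 → 𝒱 → ℝ) : Prop :=
  ∀ v w, ∃ n, 0 < n ∧ 0 < ((Matrix.of p) ^ n) v w

/-- Irreducibility and aperiodicity of a finite chain (primitivity). -/
def Primitive (p : 𝒱 → 𝒱 → ℝ) : Prop :=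
  ∃ N, ∀ n ≥ N, ∀ v w, 0 < ((Matrix.of p) ^ n) v w

/-- Invariant distribution of the embedded chain. -/
def IsInvariantDist (p : 𝒱 → 𝒱 → ℝ) (π : 𝒱 → ℝ) : Prop :=
  (∀ v, 0 < π v) ∧ (∑ v, π v = 1) ∧ (∀ w, ∑ v, π v * p v w = π w)

/-- Counting process associated to `S`. -/
noncomputable def MarkovRenewal.N (M : MarkovRenewal Ω P 𝒱) (t : ℝ) (ω : Ω) : ℕ :=
  sSup {k : ℕ | M.S k ω ≤ t}

/-- First passage time of the embedded chain through `v0`. -/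
noncomputable def MarkovRenewal.tau1 (M : MarkovRenewal Ω P 𝒱) (v0 : 𝒱) (ω : Ω) : ℕ :=
  sInf {k : ℕ | 1 ≤ k ∧ M.V k ω = v0}

end


namespace Stmt8

open MeasureTheory ProbabilityTheory Filter Set Topology

variable {Ω 𝒱 : Type} [MeasurableSpace Ω] [Fintype 𝒱] [DecidableEq 𝒱]
    [MeasurableSpace 𝒱] [MeasurableSingletonClass 𝒱]
    {P : Measure Ω} [IsProbabilityMeasure P] (M : MarkovRenewal Ω P 𝒱)

lemma measurableSet_discrete (s : Set 𝒱) : MeasurableSet s := s.toFinite.measurableSet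

/-- The history σ-algebra generated by `(V_0,S_0),…,(V_m,S_m)`. -/
def hist (m : ℕ) : MeasurableSpace Ω :=
  MeasurableSpace.comap (fun ω => fun i : Fin (m + 1) => (M.V i ω, M.S i ω)) inferInstance

lemma measurable_histMap (m : ℕ) :
    Measurable (fun ω => fun i : Fin (m + 1) => (M.V i ω, M.S i ω)) :=
  measurable_pi_lambda _ fun i => ((M.measV i).prodMk (M.measS i))

lemma hist_le (m : ℕ) : hist M m ≤ ‹MeasurableSpace Ω› :=
  (measurable_histMap M m).comap_le

lemma hist_mono {m m' : ℕ} (h : m ≤ m') : hist M m ≤ hist M m' := by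
  have heq : (fun ω => fun i : Fin (m + 1) => (M.V i ω, M.S i ω))
      = (fun g : Fin (m' + 1) → 𝒱 × ℝ => fun i : Fin (m + 1) => g ⟨i.1, by omega⟩)
        ∘ (fun ω => fun i : Fin (m' + 1) => (M.V i ω, M.S i ω)) := rfl
  have houter : Measurable (fun g : Fin (m' + 1) → 𝒱 × ℝ =>
      fun i : Fin (m + 1) => g ⟨i.1, by omega⟩) :=
    measurable_pi_lambda _ fun i => measurable_pi_apply _
  calc hist M m = MeasurableSpace.comap (fun ω => fun i : Fin (m' + 1) => (M.V i ω, M.S i ω))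
        (MeasurableSpace.comap _ inferInstance) := by
        rw [hist, heq, MeasurableSpace.comap_comp]
    _ ≤ hist M m' := MeasurableSpace.comap_mono houter.comap_le

lemma measurable_V_hist {j m : ℕ} (h : j ≤ m) : Measurable[hist M m] (M.V j) := by
  have heq : M.V j = (fun g : Fin (m + 1) → 𝒱 × ℝ => (g ⟨j, by omega⟩).1)
      ∘ (fun ω => fun i : Fin (m + 1) => (M.V i ω, M.S i ω)) := rfl
  rw [heq]
  exact (measurable_fst.comp (measurable_pi_apply _)).comp (comap_measurable _)

lemma measurable_S_hist {j m : ℕ} (h : j ≤ m) : Measurable[hist M m] (M.S j) := by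
  have heq : M.S j = (fun g : Fin (m + 1) → 𝒱 × ℝ => (g ⟨j, by omega⟩).2)
      ∘ (fun ω => fun i : Fin (m + 1) => (M.V i ω, M.S i ω)) := rfl
  rw [heq]
  exact (measurable_snd.comp (measurable_pi_apply _)).comp (comap_measurable _)

lemma measurableSet_V_eq {j m : ℕ} (h : j ≤ m) (v : 𝒱) :
    MeasurableSet[hist M m] {ω | M.V j ω = v} :=
  measurable_V_hist M h (measurableSet_discrete {v})

set_option linter.unusedSectionVars false

variable {p : 𝒱 → 𝒱 → ℝ} {π : 𝒱 → ℝ}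

lemma PV0 (hV0 : ∀ v, (P {ω | M.V 0 ω = v}).toReal = π v) (v : 𝒱) :
    P {ω | M.V 0 ω = v} = ENNReal.ofReal (π v) := by
  rw [← hV0 v, ENNReal.ofReal_toReal (measure_ne_top _ _)]

lemma Q_nonneg (hπ : IsInvariantDist p π)
    (hV0 : ∀ v, (P {ω | M.V 0 ω = v}).toReal = π v) (v w : 𝒱) (t : ℝ) :
    0 ≤ M.Q v w t := by
  have h := M.markov 0 v w t {ω | M.V 0 ω = v} (measurableSet_V_eq M le_rfl v)
    (fun _ h => h)
  have hpos : (0:ℝ) < (P {ω | M.V 0 ω = v}).toReal := by rw [hV0]; exact hπ.1 v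
  have h2 : (0:ℝ) ≤ (P {ω | M.V 0 ω = v}).toReal * M.Q v w t := h ▸ ENNReal.toReal_nonneg
  nlinarith

lemma markov_ennreal (hπ : IsInvariantDist p π)
    (hV0 : ∀ v, (P {ω | M.V 0 ω = v}).toReal = π v)
    {m : ℕ} {w w' : 𝒱} {t : ℝ} {A : Set Ω}
    (hA : MeasurableSet[hist M m] A) (hsub : A ⊆ {ω | M.V m ω = w}) :
    P (A ∩ {ω | M.V (m + 1) ω = w' ∧ M.S (m + 1) ω - M.S m ω ≤ t})
      = P A * ENNReal.ofReal (M.Q w w' t) := by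
  rw [← ENNReal.toReal_eq_toReal_iff' (measure_ne_top _ _)
    (ENNReal.mul_ne_top (measure_ne_top _ _) ENNReal.ofReal_ne_top),
    M.markov m w w' t A hA hsub, ENNReal.toReal_mul,
    ENNReal.toReal_ofReal (Q_nonneg M hπ hV0 w w' t)]

lemma p_nonneg (hp : M.IsTransitionMatrix p) (hπ : IsInvariantDist p π)
    (hV0 : ∀ v, (P {ω | M.V 0 ω = v}).toReal = π v) (v w : 𝒱) : 0 ≤ p v w :=
  ge_of_tendsto (hp v w) (Eventually.of_forall fun t => Q_nonneg M hπ hV0 v w t)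

lemma oneStep (hp : M.IsTransitionMatrix p) (hπ : IsInvariantDist p π)
    (hV0 : ∀ v, (P {ω | M.V 0 ω = v}).toReal = π v)
    {m : ℕ} {w w' : 𝒱} {A : Set Ω}
    (hA : MeasurableSet[hist M m] A) (hsub : A ⊆ {ω | M.V m ω = w}) :
    P (A ∩ {ω | M.V (m + 1) ω = w'}) = P A * ENNReal.ofReal (p w w') := by
  set g : ℕ → Set Ω := fun n =>
    A ∩ {ω | M.V (m + 1) ω = w' ∧ M.S (m + 1) ω - M.S m ω ≤ n} with hg
  have hmono : Monotone g := by
    intro a b hab ω ⟨h1, h2, h3⟩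
    exact ⟨h1, h2, h3.trans (by exact_mod_cast hab)⟩
  have hU : ⋃ n, g n = A ∩ {ω | M.V (m + 1) ω = w'} := by
    ext ω
    simp only [hg, mem_iUnion, mem_inter_iff, mem_setOf_eq]
    constructor
    · rintro ⟨n, h1, h2, _⟩; exact ⟨h1, h2⟩
    · rintro ⟨h1, h2⟩
      obtain ⟨n, hn⟩ := exists_nat_ge (M.S (m + 1) ω - M.S m ω)
      exact ⟨n, h1, h2, hn⟩
  have h1 : Tendsto (fun n : ℕ => P (g n)) atTop
      (𝓝 (P (A ∩ {ω | M.V (m + 1) ω = w'}))) := by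
    rw [← hU]; exact tendsto_measure_iUnion_atTop hmono
  have h2 : Tendsto (fun n : ℕ => (P (g n)).toReal) atTop
      (𝓝 ((P (A ∩ {ω | M.V (m + 1) ω = w'})).toReal)) :=
    (ENNReal.tendsto_toReal (measure_ne_top _ _)).comp h1
  have h3 : (fun n : ℕ => (P (g n)).toReal)
      = fun n : ℕ => (P A).toReal * M.Q w w' n := by
    funext n; exact M.markov m w w' n A hA hsub
  rw [h3] at h2
  have h4 : Tendsto (fun n : ℕ => (P A).toReal * M.Q w w' n) atTop
      (𝓝 ((P A).toReal * p w w')) :=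
    ((hp w w').comp tendsto_natCast_atTop_atTop).const_mul _
  have h5 := tendsto_nhds_unique h2 h4
  rw [← ENNReal.toReal_eq_toReal_iff' (measure_ne_top _ _)
    (ENNReal.mul_ne_top (measure_ne_top _ _) ENNReal.ofReal_ne_top),
    ENNReal.toReal_mul, ENNReal.toReal_ofReal (p_nonneg M hp hπ hV0 w w')]
  exact h5

lemma partition_V (m : ℕ) (B : Set Ω) (hB : MeasurableSet B) :
    P B = ∑ v, P (B ∩ {ω | M.V m ω = v}) := by
  have : B = ⋃ v ∈ Finset.univ, B ∩ {ω | M.V m ω = v} := by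
    ext ω; simp
  conv_lhs => rw [this]
  rw [measure_biUnion_finset]
  · intro a _ b _ hab
    simp only [Function.onFun, Set.disjoint_left]
    rintro ω ⟨_, h1⟩ ⟨_, h2⟩
    exact hab (h1.symm.trans h2)
  · intro v _
    exact hB.inter ((hist_le M m) _ (measurableSet_V_eq M le_rfl v))

lemma rowSum_one (hp : M.IsTransitionMatrix p) (hπ : IsInvariantDist p π)
    (hV0 : ∀ v, (P {ω | M.V 0 ω = v}).toReal = π v) (w : 𝒱) :
    ∑ w', p w w' = 1 := by
  set A := {ω | M.V 0 ω = w} with hA_def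
  have h1 : P A = ∑ w', P (A ∩ {ω | M.V (0 + 1) ω = w'}) :=
    partition_V M (0 + 1) A ((hist_le M 0) _ (measurableSet_V_eq M le_rfl w))
  have h2 : ∀ w', P (A ∩ {ω | M.V (0 + 1) ω = w'}) = P A * ENNReal.ofReal (p w w') :=
    fun w' => oneStep M hp hπ hV0 (measurableSet_V_eq M le_rfl w) (fun _ h => h)
  rw [Finset.sum_congr rfl (fun w' _ => h2 w'), ← Finset.mul_sum,
    ← ENNReal.ofReal_sum_of_nonneg (fun w' _ => p_nonneg M hp hπ hV0 w w')] at h1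
  have hPA : P A ≠ 0 := by
    rw [PV0 M hV0 w]
    simp only [ne_eq, ENNReal.ofReal_eq_zero, not_le]
    exact hπ.1 w
  have h3 : (1 : ENNReal) = ENNReal.ofReal (∑ w', p w w') :=
    (ENNReal.mul_right_inj hPA (measure_ne_top _ _)).mp (by rw [mul_one]; exact h1)
  exact ENNReal.ofReal_eq_one.mp h3.symm

lemma PV (hp : M.IsTransitionMatrix p) (hπ : IsInvariantDist p π)
    (hV0 : ∀ v, (P {ω | M.V 0 ω = v}).toReal = π v) (m : ℕ) (v : 𝒱) :
    P {ω | M.V m ω = v} = ENNReal.ofReal (π v) := by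
  induction m generalizing v with
  | zero => exact PV0 M hV0 v
  | succ m ih =>
    have h1 : P {ω | M.V (m + 1) ω = v}
        = ∑ u, P ({ω | M.V (m + 1) ω = v} ∩ {ω | M.V m ω = u}) :=
      partition_V M m _ ((hist_le M (m+1)) _ (measurableSet_V_eq M le_rfl v))
    have h2 : ∀ u, {ω | M.V (m + 1) ω = v} ∩ {ω | M.V m ω = u}
        = {ω | M.V m ω = u} ∩ {ω | M.V (m + 1) ω = v} := fun u => Set.inter_comm _ _
    calc P {ω | M.V (m + 1) ω = v}
        = ∑ u, P ({ω | M.V m ω = u} ∩ {ω | M.V (m + 1) ω = v}) := by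
          rw [h1]; exact Finset.sum_congr rfl fun u _ => by rw [h2 u]
      _ = ∑ u, ENNReal.ofReal (π u) * ENNReal.ofReal (p u v) := by
          refine Finset.sum_congr rfl fun u _ => ?_
          rw [oneStep M hp hπ hV0 (measurableSet_V_eq M le_rfl u) (fun _ h => h), ih u]
      _ = ENNReal.ofReal (∑ u, π u * p u v) := by
          rw [ENNReal.ofReal_sum_of_nonneg (fun u _ =>
            mul_nonneg (hπ.1 u).le (p_nonneg M hp hπ hV0 u v))]
          exact Finset.sum_congr rfl fun u _ =>
            (ENNReal.ofReal_mul (hπ.1 u).le).symm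
      _ = ENNReal.ofReal (π v) := by rw [hπ.2.2 v]


lemma matpow_nonneg (hp : M.IsTransitionMatrix p) (hπ : IsInvariantDist p π)
    (hV0 : ∀ v, (P {ω | M.V 0 ω = v}).toReal = π v) (s : ℕ) (u v : 𝒱) :
    0 ≤ ((Matrix.of p) ^ s) u v := by
  induction s generalizing u v with
  | zero =>
    rw [pow_zero]
    rcases eq_or_ne u v with h | h
    · rw [h, Matrix.one_apply_eq]; norm_num
    · rw [Matrix.one_apply_ne h]
  | succ s ih =>
    rw [pow_succ, Matrix.mul_apply]
    exact Finset.sum_nonneg fun x _ => mul_nonneg (ih u x) (p_nonneg M hp hπ hV0 x v)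

lemma matpow_rowSum (hp : M.IsTransitionMatrix p) (hπ : IsInvariantDist p π)
    (hV0 : ∀ v, (P {ω | M.V 0 ω = v}).toReal = π v) (s : ℕ) (u : 𝒱) :
    ∑ v, ((Matrix.of p) ^ s) u v = 1 := by
  induction s generalizing u with
  | zero =>
    simp [pow_zero, Matrix.one_apply]
  | succ s ih =>
    simp only [pow_succ, Matrix.mul_apply]
    rw [Finset.sum_comm]
    have : ∀ x, ∑ v, ((Matrix.of p) ^ s) u x * (Matrix.of p) x v
        = ((Matrix.of p) ^ s) u x := by
      intro x
      rw [← Finset.mul_sum]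
      have : ∑ v, (Matrix.of p) x v = 1 := rowSum_one M hp hπ hV0 x
      rw [this, mul_one]
    rw [Finset.sum_congr rfl (fun x _ => this x), ih u]

lemma multiStep (hp : M.IsTransitionMatrix p) (hπ : IsInvariantDist p π)
    (hV0 : ∀ v, (P {ω | M.V 0 ω = v}).toReal = π v)
    (s : ℕ) {m : ℕ} {w : 𝒱} {A : Set Ω}
    (hA : MeasurableSet[hist M m] A) (hsub : A ⊆ {ω | M.V m ω = w}) (v : 𝒱) :
    P (A ∩ {ω | M.V (m + s) ω = v}) = P A * ENNReal.ofReal (((Matrix.of p) ^ s) w v) := by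
  induction s generalizing v with
  | zero =>
    simp only [Nat.add_zero]
    rcases eq_or_ne w v with h | h
    · subst h
      rw [pow_zero, Matrix.one_apply_eq, ENNReal.ofReal_one, mul_one,
        Set.inter_eq_left.mpr hsub]
    · rw [pow_zero, Matrix.one_apply_ne h, ENNReal.ofReal_zero, mul_zero]
      convert measure_empty (μ := P)
      ext ω
      simp only [mem_inter_iff, mem_setOf_eq, mem_empty_iff_false, iff_false, not_and]
      intro hω hv
      exact h ((hsub hω).symm.trans hv)
  | succ s ih =>
    have hpart : P (A ∩ {ω | M.V (m + (s + 1)) ω = v})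
        = ∑ x, P ((A ∩ {ω | M.V (m + s) ω = x}) ∩ {ω | M.V (m + s + 1) ω = v}) := by
      rw [partition_V M (m + s) _ (((hist_le M (m + s + 1))) _
        (((hist_mono M (by omega)) _ hA).inter (measurableSet_V_eq M (by omega) v)))]
      exact Finset.sum_congr rfl fun x _ => by
        congr 1
        ext ω
        simp only [mem_inter_iff, mem_setOf_eq]
        tauto
    rw [hpart]
    have hterm : ∀ x, P ((A ∩ {ω | M.V (m + s) ω = x}) ∩ {ω | M.V (m + s + 1) ω = v})
        = P A * (ENNReal.ofReal (((Matrix.of p) ^ s) w x) * ENNReal.ofReal (p x v)) := by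
      intro x
      have hA' : MeasurableSet[hist M (m + s)] (A ∩ {ω | M.V (m + s) ω = x}) :=
        ((hist_mono M (by omega)) _ hA).inter (measurableSet_V_eq M le_rfl x)
      rw [oneStep M hp hπ hV0 hA' (fun ω h => h.2), ih x, mul_assoc]
    rw [Finset.sum_congr rfl fun x _ => hterm x, ← Finset.mul_sum]
    congr 1
    rw [pow_succ, Matrix.mul_apply]
    simp only [Matrix.of_apply]
    rw [ENNReal.ofReal_sum_of_nonneg (fun x _ =>
      mul_nonneg (matpow_nonneg M hp hπ hV0 s w x) (p_nonneg M hp hπ hV0 x v))]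
    exact Finset.sum_congr rfl fun x _ =>
      (ENNReal.ofReal_mul (matpow_nonneg M hp hπ hV0 s w x)).symm

/-- One-step Markov renewal property with a general Borel set of holding times,
expressed against the time-0 reference. -/
lemma step_T (hp : M.IsTransitionMatrix p) (hπ : IsInvariantDist p π)
    (hV0 : ∀ v, (P {ω | M.V 0 ω = v}).toReal = π v)
    {T : Set ℝ} (hT : MeasurableSet T) {m : ℕ} {w w' : 𝒱} {A : Set Ω}
    (hA : MeasurableSet[hist M m] A) (hsub : A ⊆ {ω | M.V m ω = w}) :
    ENNReal.ofReal (π w) * P (A ∩ {ω | M.V (m + 1) ω = w' ∧ M.S (m + 1) ω - M.S m ω ∈ T})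
      = P A * P ({ω | M.V 0 ω = w} ∩ {ω | M.V 1 ω = w' ∧ M.S 1 ω - M.S 0 ω ∈ T}) := by
  have hgen : (inferInstance : MeasurableSpace ℝ)
      = MeasurableSpace.generateFrom (range Iic) := by
    rw [BorelSpace.measurable_eq (α := ℝ), borel_eq_generateFrom_Iic]
  let ST : ℕ → 𝒱 → Set ℝ → Set Ω := fun j w' T =>
    {ω | M.V (j + 1) ω = w' ∧ M.S (j + 1) ω - M.S j ω ∈ T}
  have hmeasST : ∀ (j : ℕ) (w' : 𝒱) (T' : Set ℝ), MeasurableSet T' →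
      MeasurableSet (ST j w' T') := fun j w' T' hT' =>
    ((M.measV (j + 1)) (measurableSet_discrete {w'})).inter
      (((M.measS (j + 1)).sub (M.measS j)) hT')
  suffices h : ∀ ⦃T : Set ℝ⦄, MeasurableSet T →
      ∀ (m : ℕ) (w w' : 𝒱) (A : Set Ω), MeasurableSet[hist M m] A →
      A ⊆ {ω | M.V m ω = w} →
      ENNReal.ofReal (π w) * P (A ∩ ST m w' T)
        = P A * P ({ω | M.V 0 ω = w} ∩ ST 0 w' T) by
    exact h hT m w w' A hA hsub
  have huniv : ∀ (m : ℕ) (w w' : 𝒱) (A : Set Ω), MeasurableSet[hist M m] A →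
      A ⊆ {ω | M.V m ω = w} →
      ENNReal.ofReal (π w) * P (A ∩ {ω | M.V (m + 1) ω = w'})
        = P A * P ({ω | M.V 0 ω = w} ∩ {ω | M.V (0 + 1) ω = w'}) := by
    intro m w w' A hA hsub
    rw [oneStep M hp hπ hV0 hA hsub,
      oneStep M hp hπ hV0 (m := 0) (measurableSet_V_eq M le_rfl w) (fun _ h => h),
      PV0 M hV0 w]
    ring
  refine MeasurableSpace.induction_on_inter hgen isPiSystem_Iic ?_ ?_ ?_ ?_
  · intro m w w' A hA hsub
    have h1 : ∀ (j : ℕ), ST j w' (∅ : Set ℝ) = (∅ : Set Ω) := fun j => by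
      ext ω; simp [ST]
    rw [h1 m, h1 0]
    simp
  · rintro T ⟨t, rfl⟩
    intro m w w' A hA hsub
    have e1 : ∀ (j : ℕ), ST j w' (Iic t)
        = {ω | M.V (j + 1) ω = w' ∧ M.S (j + 1) ω - M.S j ω ≤ t} := fun j => rfl
    rw [e1 m, e1 0]
    rw [markov_ennreal M hπ hV0 hA hsub,
      markov_ennreal M hπ hV0 (m := 0) (measurableSet_V_eq M le_rfl w) (fun _ h => h),
      PV0 M hV0 w]
    ring
  · intro T hT' hC m w w' A hA hsub
    have hAmeas : MeasurableSet A := (hist_le M m) _ hA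
    have key : ∀ (j : ℕ) (B : Set Ω),
        (B ∩ ST j w' T) ∪ (B ∩ ST j w' Tᶜ) = B ∩ {ω | M.V (j + 1) ω = w'} := by
      intro j B
      ext ω
      by_cases h : M.S (j + 1) ω - M.S j ω ∈ T <;>
        simp only [ST, mem_union, mem_inter_iff, mem_setOf_eq, mem_compl_iff, h] <;> tauto
    have hdisj : ∀ (j : ℕ) (B : Set Ω), Disjoint (B ∩ ST j w' T) (B ∩ ST j w' Tᶜ) := by
      intro j B
      rw [Set.disjoint_left]
      rintro ω ⟨_, _, h1⟩ ⟨_, _, h2⟩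
      exact h2 h1
    have hsum : ∀ (j : ℕ) (B : Set Ω), MeasurableSet B →
        P (B ∩ ST j w' T) + P (B ∩ ST j w' Tᶜ) = P (B ∩ {ω | M.V (j + 1) ω = w'}) := by
      intro j B hB
      rw [← measure_union (hdisj j B) (hB.inter (hmeasST j w' Tᶜ hT'.compl)), key]
    have h0meas : MeasurableSet {ω | M.V 0 ω = w} :=
      (hist_le M 0) _ (measurableSet_V_eq M le_rfl w)
    have h1 : ENNReal.ofReal (π w) * P (A ∩ ST m w' T)
        + ENNReal.ofReal (π w) * P (A ∩ ST m w' Tᶜ)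
        = ENNReal.ofReal (π w) * P (A ∩ {ω | M.V (m + 1) ω = w'}) := by
      rw [← mul_add, hsum m A hAmeas]
    have h2 : P A * P ({ω | M.V 0 ω = w} ∩ ST 0 w' T)
        + P A * P ({ω | M.V 0 ω = w} ∩ ST 0 w' Tᶜ)
        = P A * P ({ω | M.V 0 ω = w} ∩ {ω | M.V (0 + 1) ω = w'}) := by
      rw [← mul_add, hsum 0 _ h0meas]
    have h3 := huniv m w w' A hA hsub
    have h4 := hC m w w' A hA hsub
    have h5 : ENNReal.ofReal (π w) * P (A ∩ ST m w' T)
        + ENNReal.ofReal (π w) * P (A ∩ ST m w' Tᶜ)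
        = ENNReal.ofReal (π w) * P (A ∩ ST m w' T)
          + P A * P ({ω | M.V 0 ω = w} ∩ ST 0 w' Tᶜ) := by
      rw [h1, h3, ← h2, h4]
    exact (ENNReal.add_right_inj (ENNReal.mul_ne_top ENNReal.ofReal_ne_top
      (measure_ne_top _ _))).mp h5
  · intro g hgdisj hgmeas hC m w w' A hA hsub
    have hAmeas : MeasurableSet A := (hist_le M m) _ hA
    have h0meas : MeasurableSet {ω | M.V 0 ω = w} :=
      (hist_le M 0) _ (measurableSet_V_eq M le_rfl w)
    have keyU : ∀ (j : ℕ) (B : Set Ω), B ∩ ST j w' (⋃ i, g i) = ⋃ i, B ∩ ST j w' (g i) := by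
      intro j B
      ext ω
      simp only [ST, mem_inter_iff, mem_setOf_eq, mem_iUnion]
      tauto
    have hdisjU : ∀ (j : ℕ) (B : Set Ω), Pairwise (Function.onFun Disjoint fun i => B ∩ ST j w' (g i)) := by
      intro j B i i' hii'
      simp only [Function.onFun, Set.disjoint_left]
      rintro ω ⟨_, _, h1⟩ ⟨_, _, h2⟩
      exact Set.disjoint_left.mp (hgdisj hii') h1 h2
    have hPU : ∀ (j : ℕ) (B : Set Ω), MeasurableSet B →
        P (B ∩ ST j w' (⋃ i, g i)) = ∑' i, P (B ∩ ST j w' (g i)) := by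
      intro j B hB
      rw [keyU j B]
      exact measure_iUnion (hdisjU j B) fun i => hB.inter (hmeasST j w' (g i) (hgmeas i))
    rw [hPU m A hAmeas, hPU 0 _ h0meas, ENNReal.tsum_mul_left.symm, ENNReal.tsum_mul_left.symm]
    exact tsum_congr fun i => hC i m w w' A hA hsub

/-- The conditional-independence/homogeneity predicate for a family of future-observation
maps `Φ j : Ω → β`. -/
def MixPred (π : 𝒱 → ℝ) {β : Type} (Φ : ℕ → Ω → β) (C : Set β) : Prop :=
  ∀ (m : ℕ) (w : 𝒱) (A : Set Ω), MeasurableSet[hist M m] A → A ⊆ {ω | M.V m ω = w} →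
    ENNReal.ofReal (π w) * P (A ∩ Φ m ⁻¹' C)
      = P A * P ({ω | M.V 0 ω = w} ∩ Φ 0 ⁻¹' C)

lemma mixPred_univ (hV0 : ∀ v, (P {ω | M.V 0 ω = v}).toReal = π v)
    {β : Type} (Φ : ℕ → Ω → β) : MixPred M π Φ univ := by
  intro m w A hA hsub
  simp only [preimage_univ, inter_univ]
  rw [PV0 M hV0 w, mul_comm]

lemma mixPred_empty {β : Type} (Φ : ℕ → Ω → β) : MixPred M π Φ ∅ := by
  intro m w A hA hsub
  simp

lemma mixPred_compl (hV0 : ∀ v, (P {ω | M.V 0 ω = v}).toReal = π v)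
    {β : Type} [MeasurableSpace β] (Φ : ℕ → Ω → β) (hΦ : ∀ j, Measurable (Φ j))
    {C : Set β} (hCm : MeasurableSet C) (hC : MixPred M π Φ C) :
    MixPred M π Φ Cᶜ := by
  intro m w A hA hsub
  have hAmeas : MeasurableSet A := (hist_le M m) _ hA
  have h0meas : MeasurableSet {ω | M.V 0 ω = w} :=
    (hist_le M 0) _ (measurableSet_V_eq M le_rfl w)
  have hsum : ∀ (j : ℕ) (B : Set Ω), MeasurableSet B →
      P (B ∩ Φ j ⁻¹' C) + P (B ∩ Φ j ⁻¹' Cᶜ) = P B := by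
    intro j B hB
    rw [← measure_union (by
        rw [Set.disjoint_left]; rintro ω ⟨_, h1⟩ ⟨_, h2⟩; exact h2 h1)
      (hB.inter ((hΦ j) hCm.compl))]
    congr 1
    ext ω
    by_cases h : Φ j ω ∈ C <;> simp [h]
  have h1 : ENNReal.ofReal (π w) * P (A ∩ Φ m ⁻¹' C)
      + ENNReal.ofReal (π w) * P (A ∩ Φ m ⁻¹' Cᶜ) = ENNReal.ofReal (π w) * P A := by
    rw [← mul_add, hsum m A hAmeas]
  have h2 : P A * P ({ω | M.V 0 ω = w} ∩ Φ 0 ⁻¹' C)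
      + P A * P ({ω | M.V 0 ω = w} ∩ Φ 0 ⁻¹' Cᶜ)
      = P A * P {ω | M.V 0 ω = w} := by
    rw [← mul_add, hsum 0 _ h0meas]
  have h3 : ENNReal.ofReal (π w) * P A = P A * P {ω | M.V 0 ω = w} := by
    rw [PV0 M hV0 w, mul_comm]
  have h5 : ENNReal.ofReal (π w) * P (A ∩ Φ m ⁻¹' C)
      + ENNReal.ofReal (π w) * P (A ∩ Φ m ⁻¹' Cᶜ)
      = ENNReal.ofReal (π w) * P (A ∩ Φ m ⁻¹' C)
        + P A * P ({ω | M.V 0 ω = w} ∩ Φ 0 ⁻¹' Cᶜ) := by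
    rw [h1, h3, ← h2, hC m w A hA hsub]
  exact (ENNReal.add_right_inj (ENNReal.mul_ne_top ENNReal.ofReal_ne_top
    (measure_ne_top _ _))).mp h5

lemma mixPred_iUnion {β : Type} [MeasurableSpace β] (Φ : ℕ → Ω → β)
    (hΦ : ∀ j, Measurable (Φ j)) {g : ℕ → Set β}
    (hgdisj : Pairwise (Function.onFun Disjoint g)) (hgmeas : ∀ i, MeasurableSet (g i))
    (hC : ∀ i, MixPred M π Φ (g i)) : MixPred M π Φ (⋃ i, g i) := by
  intro m w A hA hsub
  have hAmeas : MeasurableSet A := (hist_le M m) _ hA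
  have h0meas : MeasurableSet {ω | M.V 0 ω = w} :=
    (hist_le M 0) _ (measurableSet_V_eq M le_rfl w)
  have hPU : ∀ (j : ℕ) (B : Set Ω), MeasurableSet B →
      P (B ∩ Φ j ⁻¹' (⋃ i, g i)) = ∑' i, P (B ∩ Φ j ⁻¹' (g i)) := by
    intro j B hB
    rw [preimage_iUnion, Set.inter_iUnion]
    exact measure_iUnion
      (fun i i' hii' => by
        simp only [Function.onFun, Set.disjoint_left]
        rintro ω ⟨_, h1⟩ ⟨_, h2⟩
        exact Set.disjoint_left.mp (hgdisj hii') h1 h2)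
      (fun i => hB.inter ((hΦ j) (hgmeas i)))
  rw [hPU m A hAmeas, hPU 0 _ h0meas, ENNReal.tsum_mul_left.symm, ENNReal.tsum_mul_left.symm]
  exact tsum_congr fun i => hC i m w A hA hsub

/-- Finite windows of the future observation process. -/
def Wmap (m r : ℕ) : Ω → (Fin r → 𝒱 × ℝ) := fun ω j =>
  (M.V (m + 1 + j) ω, M.S (m + 1 + j) ω - M.S (m + j) ω)

lemma measurable_Wmap (m r : ℕ) : Measurable (Wmap M m r) :=
  measurable_pi_lambda _ fun j =>
    (M.measV _).prodMk ((M.measS _).sub (M.measS _))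

lemma Hfin (hp : M.IsTransitionMatrix p) (hπ : IsInvariantDist p π)
    (hV0 : ∀ v, (P {ω | M.V 0 ω = v}).toReal = π v) :
    ∀ (r : ℕ) ⦃D : Set (Fin r → 𝒱 × ℝ)⦄, MeasurableSet D →
      MixPred M π (fun j => Wmap M j r) D := by
  intro r
  induction r with
  | zero =>
    intro D hD
    rcases D.eq_empty_or_nonempty with h | ⟨y, hy⟩
    · rw [h]; exact mixPred_empty M _
    · have hDu : D = univ := eq_univ_of_forall fun x => by
        rw [show x = y from funext fun i => i.elim0]; exact hy
      rw [hDu]; exact mixPred_univ M hV0 _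
  | succ r ih =>
    have hgen : (inferInstance : MeasurableSpace (Fin (r + 1) → 𝒱 × ℝ))
        = MeasurableSpace.generateFrom
          (pi univ '' pi univ fun _ => {s : Set (𝒱 × ℝ) | MeasurableSet s}) :=
      generateFrom_pi.symm
    refine MeasurableSpace.induction_on_inter hgen isPiSystem_pi
      (mixPred_empty M _) ?_
      (fun D hD hC => mixPred_compl M hV0 _ (fun j => measurable_Wmap M j (r+1)) hD hC)
      (fun g hd hm hC => mixPred_iUnion M _ (fun j => measurable_Wmap M j (r+1)) hd hm hC)
    rintro D ⟨t, ht, rfl⟩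
    intro m w A hA hsub
    simp only [mem_univ_pi, mem_setOf_eq] at ht
    -- slice of the first-coordinate constraint
    set sl : 𝒱 → Set ℝ := fun w' => {x | (w', x) ∈ t 0} with hsl
    have hslm : ∀ w', MeasurableSet (sl w') := fun w' =>
      measurable_prodMk_left (ht 0)
    set D' : Set (Fin r → 𝒱 × ℝ) := univ.pi (fun i => t i.succ) with hD'
    have hD'm : MeasurableSet D' := MeasurableSet.univ_pi fun i => ht i.succ
    -- decomposition of the window event
    have hW : ∀ (j : ℕ) (ω : Ω), (fun i : Fin r => Wmap M j (r + 1) ω i.succ)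
        = Wmap M (j + 1) r ω := by
      intro j ω
      funext i
      simp only [Wmap, Fin.val_succ]
      have e1 : j + 1 + ((i : ℕ) + 1) = j + 1 + 1 + (i : ℕ) := by omega
      have e2 : j + ((i : ℕ) + 1) = j + 1 + (i : ℕ) := by omega
      rw [e1, e2]
    have hsetid : ∀ (j : ℕ) (B : Set Ω), B ∩ Wmap M j (r + 1) ⁻¹' (univ.pi t)
        = ⋃ w' ∈ Finset.univ, (B ∩ {ω | M.V (j + 1) ω = w'
            ∧ M.S (j + 1) ω - M.S j ω ∈ sl w'}) ∩ Wmap M (j + 1) r ⁻¹' D' := by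
      intro j B
      ext ω
      simp only [mem_inter_iff, mem_preimage, mem_univ_pi, Finset.mem_univ,
        mem_iUnion, mem_setOf_eq, exists_true_left]
      constructor
      · rintro ⟨hB, hall⟩
        refine ⟨M.V (j + 1) ω, ⟨hB, rfl, ?_⟩, ?_⟩
        · have h0 := hall 0
          simp only [Wmap, Fin.val_zero, Nat.add_zero] at h0
          exact h0
        · intro i _
          rw [← hW j ω]
          exact hall i.succ
      · rintro ⟨w', ⟨hB, hV, hgap⟩, hrest⟩
        refine ⟨hB, ?_⟩
        intro i
        refine Fin.cases ?_ ?_ i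
        · simp only [Wmap, Fin.val_zero, Nat.add_zero]
          rw [hV]
          exact hgap
        · intro i
          rw [show Wmap M j (r + 1) ω i.succ = Wmap M (j + 1) r ω i from
            congrFun (hW j ω) i]
          exact hrest i (mem_univ i)
    -- measure of the decomposition
    have hPdecomp : ∀ (j : ℕ) (B : Set Ω), MeasurableSet B →
        P (B ∩ Wmap M j (r + 1) ⁻¹' (univ.pi t))
        = ∑ w', P ((B ∩ {ω | M.V (j + 1) ω = w'
            ∧ M.S (j + 1) ω - M.S j ω ∈ sl w'}) ∩ Wmap M (j + 1) r ⁻¹' D') := by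
      intro j B hB
      rw [hsetid j B]
      refine measure_biUnion_finset ?_ ?_
      · intro a _ b _ hab
        simp only [Function.onFun, Set.disjoint_left]
        rintro ω ⟨⟨_, h1, _⟩, _⟩ ⟨⟨_, h2, _⟩, _⟩
        exact hab (h1.symm.trans h2)
      · intro w' _
        exact (hB.inter (((M.measV (j + 1)) (measurableSet_discrete {w'})).inter
          (((M.measS (j + 1)).sub (M.measS j)) (hslm w')))).inter
          ((measurable_Wmap M (j + 1) r) hD'm)
    have hAmeas : MeasurableSet A := (hist_le M m) _ hA
    have h0meas : MeasurableSet {ω | M.V 0 ω = w} :=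
      (hist_le M 0) _ (measurableSet_V_eq M le_rfl w)
    rw [hPdecomp m A hAmeas, hPdecomp 0 _ h0meas, Finset.mul_sum, Finset.mul_sum]
    refine Finset.sum_congr rfl fun w' _ => ?_
    -- termwise equality
    set A' : Set Ω := A ∩ {ω | M.V (m + 1) ω = w' ∧ M.S (m + 1) ω - M.S m ω ∈ sl w'}
      with hA'def
    set A0' : Set Ω := {ω | M.V 0 ω = w} ∩ {ω | M.V (0 + 1) ω = w'
      ∧ M.S (0 + 1) ω - M.S 0 ω ∈ sl w'} with hA0'def
    have hA'm : MeasurableSet[hist M (m + 1)] A' :=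
      ((hist_mono M (by omega)) _ hA).inter
        ((measurableSet_V_eq M le_rfl w').inter
          (((measurable_S_hist M le_rfl).sub (measurable_S_hist M (by omega))) (hslm w')))
    have hA'sub : A' ⊆ {ω | M.V (m + 1) ω = w'} := fun ω h => h.2.1
    have hA0'm : MeasurableSet[hist M 1] A0' :=
      ((hist_mono M (by omega)) _ (measurableSet_V_eq M le_rfl w)).inter
        ((measurableSet_V_eq M le_rfl w').inter
          (((measurable_S_hist M le_rfl).sub (measurable_S_hist M (by omega))) (hslm w')))
    have hA0'sub : A0' ⊆ {ω | M.V (0 + 1) ω = w'} := fun ω h => h.2.1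
    have ihA' := ih hD'm (m + 1) w' A' hA'm hA'sub
    have ihA0' := ih hD'm 1 w' A0' hA0'm hA0'sub
    have hstepA : ENNReal.ofReal (π w) * P A' = P A
        * P ({ω | M.V 0 ω = w} ∩ {ω | M.V 1 ω = w'
            ∧ M.S 1 ω - M.S 0 ω ∈ sl w'}) :=
      step_T M hp hπ hV0 (hslm w') hA hsub
    have hstepA0 : ENNReal.ofReal (π w) * P A0' = P {ω | M.V 0 ω = w}
        * P ({ω | M.V 0 ω = w} ∩ {ω | M.V 1 ω = w'
            ∧ M.S 1 ω - M.S 0 ω ∈ sl w'}) :=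
      step_T M hp hπ hV0 (hslm w') (m := 0) (measurableSet_V_eq M le_rfl w) (fun _ h => h)
    set γ : ENNReal := P ({ω | M.V 0 ω = w} ∩ {ω | M.V 1 ω = w'
        ∧ M.S 1 ω - M.S 0 ω ∈ sl w'}) with hγ
    set β : ENNReal := P ({ω | M.V 0 ω = w'} ∩ Wmap M 0 r ⁻¹' D') with hβ
    have hπw' : ENNReal.ofReal (π w') ≠ 0 := by
      simp only [ne_eq, ENNReal.ofReal_eq_zero, not_le]
      exact hπ.1 w'
    have hPA0' : P A0' = γ := by
      have hπw : ENNReal.ofReal (π w) ≠ 0 := by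
        simp only [ne_eq, ENNReal.ofReal_eq_zero, not_le]
        exact hπ.1 w
      refine (ENNReal.mul_right_inj hπw ENNReal.ofReal_ne_top).mp ?_
      rw [hstepA0, PV0 M hV0 w]
    refine (ENNReal.mul_right_inj hπw' ENNReal.ofReal_ne_top).mp ?_
    calc ENNReal.ofReal (π w') * (ENNReal.ofReal (π w) * P (A' ∩ Wmap M (m + 1) r ⁻¹' D'))
        = ENNReal.ofReal (π w) * (ENNReal.ofReal (π w') * P (A' ∩ Wmap M (m + 1) r ⁻¹' D'))
          := by ring
      _ = ENNReal.ofReal (π w) * (P A' * β) := by rw [ihA']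
      _ = (ENNReal.ofReal (π w) * P A') * β := by ring
      _ = (P A * γ) * β := by rw [hstepA]
      _ = P A * (γ * β) := by ring
      _ = P A * (P A0' * β) := by rw [hPA0']
      _ = P A * (ENNReal.ofReal (π w') * P (A0' ∩ Wmap M 1 r ⁻¹' D')) := by rw [ihA0']
      _ = ENNReal.ofReal (π w') * (P A
            * P (({ω | M.V 0 ω = w} ∩ {ω | M.V (0 + 1) ω = w'
              ∧ M.S (0 + 1) ω - M.S 0 ω ∈ sl w'}) ∩ Wmap M (0 + 1) r ⁻¹' D')) := by
          rw [hA0'def]; ring_nf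

/-- The full future observation process from time `m`. -/
def Psi (m : ℕ) : Ω → (ℕ → 𝒱 × ℝ) := fun ω j =>
  (M.V (m + 1 + j) ω, M.S (m + 1 + j) ω - M.S (m + j) ω)

lemma measurable_Psi (m : ℕ) : Measurable (Psi M m) :=
  measurable_pi_lambda _ fun j =>
    (M.measV _).prodMk ((M.measS _).sub (M.measS _))

lemma claimH (hp : M.IsTransitionMatrix p) (hπ : IsInvariantDist p π)
    (hV0 : ∀ v, (P {ω | M.V 0 ω = v}).toReal = π v) :
    ∀ ⦃C : Set (ℕ → 𝒱 × ℝ)⦄, MeasurableSet C → MixPred M π (Psi M) C := by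
  have hgen : (inferInstance : MeasurableSpace (ℕ → 𝒱 × ℝ))
      = MeasurableSpace.generateFrom (measurableCylinders (fun _ : ℕ => 𝒱 × ℝ)) :=
    generateFrom_measurableCylinders.symm
  refine MeasurableSpace.induction_on_inter hgen isPiSystem_measurableCylinders
    (mixPred_empty M _) ?_
    (fun C hC h => mixPred_compl M hV0 _ (measurable_Psi M) hC h)
    (fun g hd hm hC => mixPred_iUnion M _ (measurable_Psi M) hd hm hC)
  intro C hC
  obtain ⟨s, S0, hS0, rfl⟩ := (mem_measurableCylinders _).mp hC
  have hmem : ∀ i ∈ s, (i : ℕ) < s.sup id + 1 := fun i hi =>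
    Nat.lt_succ_of_le (Finset.le_sup (f := id) hi)
  set r := s.sup id + 1 with hr
  set proj : (Fin r → 𝒱 × ℝ) → (∀ i : s, 𝒱 × ℝ) := fun x i => x ⟨i.1, hmem i.1 i.2⟩
    with hproj
  have hprojm : Measurable proj := measurable_pi_lambda _ fun i => measurable_pi_apply _
  have hkey : ∀ j, Psi M j ⁻¹' (cylinder s S0) = Wmap M j r ⁻¹' (proj ⁻¹' S0) :=
    fun j => rfl
  intro m w A hA hsub
  calc ENNReal.ofReal (π w) * P (A ∩ Psi M m ⁻¹' cylinder s S0)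
      = ENNReal.ofReal (π w) * P (A ∩ Wmap M m r ⁻¹' (proj ⁻¹' S0)) := by rw [hkey m]
    _ = P A * P ({ω | M.V 0 ω = w} ∩ Wmap M 0 r ⁻¹' (proj ⁻¹' S0)) :=
        Hfin M hp hπ hV0 r (hprojm hS0) m w A hA hsub
    _ = P A * P ({ω | M.V 0 ω = w} ∩ Psi M 0 ⁻¹' cylinder s S0) := by rw [hkey 0]

lemma matpow_le_one (hp : M.IsTransitionMatrix p) (hπ : IsInvariantDist p π)
    (hV0 : ∀ v, (P {ω | M.V 0 ω = v}).toReal = π v) (s : ℕ) (u v : 𝒱) :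
    ((Matrix.of p) ^ s) u v ≤ 1 := by
  have h := matpow_rowSum M hp hπ hV0 s u
  have h2 := Finset.single_le_sum (f := fun v' => ((Matrix.of p) ^ s) u v')
    (fun x _ => matpow_nonneg M hp hπ hV0 s u x) (Finset.mem_univ v)
  linarith

lemma pi_inv_pow (hπ : IsInvariantDist p π) (s : ℕ) (v : 𝒱) :
    ∑ u, π u * ((Matrix.of p) ^ s) u v = π v := by
  induction s generalizing v with
  | zero =>
    simp only [pow_zero, Matrix.one_apply, mul_ite, mul_one, mul_zero]
    rw [Finset.sum_ite_eq' Finset.univ v π]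
    simp
  | succ s ih =>
    calc ∑ u, π u * ((Matrix.of p) ^ (s + 1)) u v
        = ∑ u, ∑ x, π u * (((Matrix.of p) ^ s) u x * p x v) := by
          simp only [pow_succ, Matrix.mul_apply, Matrix.of_apply, Finset.mul_sum]
      _ = ∑ x, ∑ u, π u * (((Matrix.of p) ^ s) u x * p x v) := Finset.sum_comm
      _ = ∑ x, (∑ u, π u * ((Matrix.of p) ^ s) u x) * p x v := by
          refine Finset.sum_congr rfl fun x _ => ?_
          rw [Finset.sum_mul]
          exact Finset.sum_congr rfl fun u _ => by ring
      _ = ∑ x, π x * p x v := by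
          exact Finset.sum_congr rfl fun x _ => by rw [ih x]
      _ = π v := hπ.2.2 v

lemma geom_bound (hp : M.IsTransitionMatrix p) (hπ : IsInvariantDist p π)
    (hV0 : ∀ v, (P {ω | M.V 0 ω = v}).toReal = π v) (hprim : Primitive p) :
    ∃ c ρ : ℝ, 0 < c ∧ 0 < ρ ∧ ρ < 1 ∧
      ∀ (s : ℕ) (u v : 𝒱), |((Matrix.of p) ^ s) u v - π v| ≤ c * ρ ^ s := by
  have hne : Nonempty 𝒱 := by
    by_contra h
    rw [not_nonempty_iff] at h
    have h1 := hπ.2.1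
    rw [Finset.univ_eq_empty, Finset.sum_empty] at h1
    norm_num at h1
  have hFne : (Finset.univ : Finset 𝒱).Nonempty := Finset.univ_nonempty
  obtain ⟨N0, hN0⟩ := hprim
  set N := N0 + 1 with hN
  have hNpos : 0 < N := Nat.succ_pos _
  have hposN : ∀ u x, 0 < ((Matrix.of p) ^ N) u x := fun u x =>
    hN0 N (Nat.le_succ _) u x
  set q : ℕ → Matrix 𝒱 𝒱 ℝ := fun s => (Matrix.of p) ^ s with hqdef
  set ε : ℝ := Finset.univ.inf' hFne
    (fun u => Finset.univ.inf' hFne (fun x => q N u x)) with hεdef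
  have hεle : ∀ u x, ε ≤ q N u x := fun u x =>
    le_trans (Finset.inf'_le _ (Finset.mem_univ u)) (Finset.inf'_le _ (Finset.mem_univ x))
  have hεpos : 0 < ε := by
    rw [hεdef, Finset.lt_inf'_iff]
    intro u _
    rw [Finset.lt_inf'_iff]
    intro x _
    exact hposN u x
  set card : ℝ := (Fintype.card 𝒱 : ℝ) with hcard
  have hcard_pos : 0 < card := by
    rw [hcard]
    exact_mod_cast Fintype.card_pos
  have hZ1 : card * ε ≤ 1 := by
    obtain ⟨u⟩ := hne
    have h1 : ∑ x : 𝒱, ε ≤ ∑ x, q N u x :=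
      Finset.sum_le_sum fun x _ => hεle u x
    rw [Finset.sum_const, nsmul_eq_mul] at h1
    rw [matpow_rowSum M hp hπ hV0 N u] at h1
    exact h1
  set γ : ℝ := 1 - card * ε with hγdef
  have hγ0 : 0 ≤ γ := by rw [hγdef]; linarith
  have hγlt : γ < 1 := by rw [hγdef]; nlinarith
  set γ' : ℝ := max γ (1 / 2) with hγ'def
  have hγ'pos : 0 < γ' := lt_of_lt_of_le (by norm_num) (le_max_right _ _)
  have hγ'lt : γ' < 1 := max_lt hγlt (by norm_num)
  have hγγ' : γ ≤ γ' := le_max_left _ _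
  set Mx : ℕ → 𝒱 → ℝ := fun s v => Finset.univ.sup' hFne (fun u => q s u v) with hMxdef
  set mn : ℕ → 𝒱 → ℝ := fun s v => Finset.univ.inf' hFne (fun u => q s u v) with hmndef
  have hle_Mx : ∀ s v u, q s u v ≤ Mx s v := by
    intro s v u
    simp only [hMxdef]
    exact Finset.le_sup' (fun u => q s u v) (Finset.mem_univ u)
  have hmn_le : ∀ s v u, mn s v ≤ q s u v := by
    intro s v u
    simp only [hmndef]
    exact Finset.inf'_le (fun u => q s u v) (Finset.mem_univ u)
  have hosc_nonneg : ∀ s v, 0 ≤ Mx s v - mn s v := by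
    intro s v
    obtain ⟨u⟩ := hne
    have := (hmn_le s v u).trans (hle_Mx s v u)
    linarith
  have hosc1 : ∀ s v, Mx s v - mn s v ≤ 1 := by
    intro s v
    have h1 : Mx s v ≤ 1 := by
      simp only [hMxdef]
      exact Finset.sup'_le _ _ fun u _ => matpow_le_one M hp hπ hV0 s u v
    have h2 : 0 ≤ mn s v := by
      simp only [hmndef]
      exact Finset.le_inf' _ _ fun u _ => matpow_nonneg M hp hπ hV0 s u v
    linarith
  have hdiff_le : ∀ s v u u', q s u v - q s u' v ≤ Mx s v - mn s v := fun s v u u' =>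
    sub_le_sub (hle_Mx s v u) (hmn_le s v u')
  -- Doeblin contraction
  have hcontr : ∀ (s : ℕ) (v : 𝒱), Mx (N + s) v - mn (N + s) v ≤ γ' * (Mx s v - mn s v) := by
    intro s v
    obtain ⟨u0, _, hu0⟩ := Finset.exists_mem_eq_sup' hFne (fun u => q (N + s) u v)
    obtain ⟨u1, _, hu1⟩ := Finset.exists_mem_eq_inf' hFne (fun u => q (N + s) u v)
    have hq : ∀ u, q (N + s) u v = ∑ x, q N u x * q s x v := by
      intro u
      rw [hqdef]
      simp only [pow_add, Matrix.mul_apply]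
    set ζ : 𝒱 → ℝ := fun x => min (q N u0 x) (q N u1 x) with hζdef
    have hζ0 : ∀ x, 0 ≤ q N u0 x - ζ x := fun x => by
      simp [hζdef, min_le_left]
    have hζ1 : ∀ x, 0 ≤ q N u1 x - ζ x := fun x => by
      simp [hζdef, min_le_right]
    have hζε : ∀ x, ε ≤ ζ x := fun x => le_min (hεle u0 x) (hεle u1 x)
    have hsum0 : ∑ x, q N u0 x = 1 := matpow_rowSum M hp hπ hV0 N u0
    have hsum1 : ∑ x, q N u1 x = 1 := matpow_rowSum M hp hπ hV0 N u1
    have hstep1 : Mx (N + s) v - mn (N + s) v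
        = ∑ x, (q N u0 x - ζ x) * q s x v - ∑ x, (q N u1 x - ζ x) * q s x v := by
      rw [hMxdef, hmndef]
      simp only
      rw [hu0, hu1, hq u0, hq u1]
      simp only [sub_mul, Finset.sum_sub_distrib]
      ring
    have hstep2 : ∑ x, (q N u0 x - ζ x) * q s x v ≤ ∑ x, (q N u0 x - ζ x) * Mx s v :=
      Finset.sum_le_sum fun x _ =>
        mul_le_mul_of_nonneg_left (hle_Mx s v x) (hζ0 x)
    have hstep3 : ∑ x, (q N u1 x - ζ x) * mn s v ≤ ∑ x, (q N u1 x - ζ x) * q s x v :=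
      Finset.sum_le_sum fun x _ =>
        mul_le_mul_of_nonneg_left (hmn_le s v x) (hζ1 x)
    have hstep4 : ∑ x, (q N u0 x - ζ x) * Mx s v - ∑ x, (q N u1 x - ζ x) * mn s v
        = (1 - ∑ x, ζ x) * (Mx s v - mn s v) := by
      rw [← Finset.sum_mul, ← Finset.sum_mul]
      simp only [Finset.sum_sub_distrib]
      rw [hsum0, hsum1]
      ring
    have hZζ : card * ε ≤ ∑ x, ζ x := by
      have h1 : ∑ x : 𝒱, ε ≤ ∑ x, ζ x := Finset.sum_le_sum fun x _ => hζε x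
      rw [Finset.sum_const, nsmul_eq_mul] at h1
      exact h1
    have h1Z : 1 - ∑ x, ζ x ≤ γ' := by
      rw [hγ'def]
      refine le_trans ?_ (le_max_left _ _)
      rw [hγdef]
      linarith
    calc Mx (N + s) v - mn (N + s) v
        = ∑ x, (q N u0 x - ζ x) * q s x v - ∑ x, (q N u1 x - ζ x) * q s x v := hstep1
      _ ≤ ∑ x, (q N u0 x - ζ x) * Mx s v - ∑ x, (q N u1 x - ζ x) * mn s v := by
          have := hstep2
          have := hstep3
          linarith
      _ = (1 - ∑ x, ζ x) * (Mx s v - mn s v) := hstep4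
      _ ≤ γ' * (Mx s v - mn s v) := mul_le_mul_of_nonneg_right h1Z (hosc_nonneg s v)
  -- iterate the contraction
  have hosc_div : ∀ (s : ℕ) (v : 𝒱), Mx s v - mn s v ≤ γ' ^ (s / N) := by
    intro s
    induction s using Nat.strong_induction_on with
    | _ s ih =>
      intro v
      by_cases hs : s < N
      · rw [Nat.div_eq_of_lt hs, pow_zero]
        exact hosc1 s v
      · push_neg at hs
        have hrw : s = N + (s - N) := by omega
        have h1 : Mx s v - mn s v ≤ γ' * (Mx (s - N) v - mn (s - N) v) := by
          conv_lhs => rw [hrw]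
          exact hcontr _ v
        have h2 : Mx (s - N) v - mn (s - N) v ≤ γ' ^ ((s - N) / N) :=
          ih (s - N) (by omega) v
        have h3 : (s - N) / N + 1 = s / N := by
          conv_rhs => rw [Nat.div_eq]
          simp [hNpos, hs]
        calc Mx s v - mn s v ≤ γ' * γ' ^ ((s - N) / N) :=
              h1.trans (mul_le_mul_of_nonneg_left h2 hγ'pos.le)
          _ = γ' ^ ((s - N) / N + 1) := by rw [pow_succ]; ring
          _ = γ' ^ (s / N) := by rw [h3]
  -- from oscillation to distance to π
  have habs : ∀ (s : ℕ) (u v : 𝒱), |q s u v - π v| ≤ Mx s v - mn s v := by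
    intro s u v
    have hdecomp : q s u v - π v = ∑ u', π u' * (q s u v - q s u' v) := by
      have h1 : ∑ u', π u' * (q s u v - q s u' v)
          = (∑ u', π u') * q s u v - ∑ u', π u' * q s u' v := by
        simp only [mul_sub]
        rw [Finset.sum_sub_distrib, ← Finset.sum_mul]
      rw [h1, hπ.2.1, one_mul]
      simp only [hqdef]
      rw [pi_inv_pow hπ s v]
    rw [hdecomp]
    refine (Finset.abs_sum_le_sum_abs _ _).trans ?_
    have hterm : ∀ u', |π u' * (q s u v - q s u' v)| ≤ π u' * (Mx s v - mn s v) := by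
      intro u'
      rw [abs_mul, abs_of_pos (hπ.1 u')]
      refine mul_le_mul_of_nonneg_left ?_ (hπ.1 u').le
      rw [abs_sub_le_iff]
      constructor
      · exact hdiff_le s v u u'
      · exact hdiff_le s v u' u
    calc ∑ u', |π u' * (q s u v - q s u' v)| ≤ ∑ u', π u' * (Mx s v - mn s v) :=
          Finset.sum_le_sum fun u' _ => hterm u'
      _ = (∑ u', π u') * (Mx s v - mn s v) := by rw [Finset.sum_mul]
      _ = Mx s v - mn s v := by rw [hπ.2.1, one_mul]
  -- convert to a clean geometric bound
  set ρ : ℝ := γ' ^ ((N : ℝ)⁻¹) with hρdef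
  have hρpos : 0 < ρ := Real.rpow_pos_of_pos hγ'pos _
  have hρlt : ρ < 1 := Real.rpow_lt_one hγ'pos.le hγ'lt (by positivity)
  have hρN : ρ ^ N = γ' := by
    rw [hρdef, ← Real.rpow_natCast (γ' ^ ((N : ℝ)⁻¹)) N, ← Real.rpow_mul hγ'pos.le,
      inv_mul_cancel₀ (by exact_mod_cast hNpos.ne'), Real.rpow_one]
  have hgeo : ∀ s : ℕ, γ' ^ (s / N) ≤ (ρ ^ (N - 1))⁻¹ * ρ ^ s := by
    intro s
    have h1 : γ' ^ (s / N) = ρ ^ (N * (s / N)) := by rw [pow_mul, hρN]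
    have h2 : s ≤ N * (s / N) + (N - 1) := by
      have h3 := Nat.div_add_mod s N
      have h4 : s % N < N := Nat.mod_lt _ hNpos
      omega
    have h3 : ρ ^ (N * (s / N) + (N - 1)) ≤ ρ ^ s :=
      pow_le_pow_of_le_one hρpos.le hρlt.le h2
    rw [pow_add] at h3
    have hpow_pos : (0:ℝ) < ρ ^ (N - 1) := pow_pos hρpos _
    rw [h1, inv_mul_eq_div, le_div_iff₀ hpow_pos]
    linarith
  refine ⟨(ρ ^ (N - 1))⁻¹, ρ, by positivity, hρpos, hρlt, ?_⟩
  intro s u v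
  calc |((Matrix.of p) ^ s) u v - π v| ≤ Mx s v - mn s v := habs s u v
    _ ≤ γ' ^ (s / N) := hosc_div s v
    _ ≤ (ρ ^ (N - 1))⁻¹ * ρ ^ s := hgeo s

end Stmt8

/-- the stationary sequence `η_k = f(V̂_{k−1}, S_k − S_{k−1})` obtained
from a Markov renewal process with primitive embedded chain and stationary start is
φ-mixing with geometric coefficients `φ_n = K ρ^{n−1}`: for all events `A` in
`σ(η_1,…,η_k)` with `P(A) > 0` and `B` in `σ(η_{k+n}, η_{k+n+1},…)`,
`|P(B|A) − P(B)| ≤ K ρ^{n−1}`. -/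
theorem stmt8 {Ω 𝒱 : Type} [MeasurableSpace Ω] [Fintype 𝒱] [DecidableEq 𝒱]
    [MeasurableSpace 𝒱] [MeasurableSingletonClass 𝒱]
    (P : Measure Ω) [IsProbabilityMeasure P] (M : MarkovRenewal Ω P 𝒱)
    (p : 𝒱 → 𝒱 → ℝ) (hp : M.IsTransitionMatrix p) (hprim : Primitive p)
    (π : 𝒱 → ℝ) (hπ : IsInvariantDist p π)
    (hV0 : ∀ v, (P {ω | M.V 0 ω = v}).toReal = π v)
    (f : 𝒱 → ℝ → ℝ) (hf : Measurable (Function.uncurry f)) :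
    ∃ K > (0:ℝ), ∃ ρ ∈ Set.Ico (0:ℝ) 1, ∀ (k n : ℕ), 1 ≤ k → 1 ≤ n →
      ∀ A B : Set Ω,
        MeasurableSet[MeasurableSpace.comap
          (fun ω => fun j : Fin k =>
            f (M.V (j : ℕ) ω) (M.S ((j : ℕ) + 1) ω - M.S (j : ℕ) ω)) inferInstance] A →
        MeasurableSet[MeasurableSpace.comap
          (fun ω => fun j : ℕ =>
            f (M.V (k + n - 1 + j) ω) (M.S (k + n + j) ω - M.S (k + n - 1 + j) ω))
          inferInstance] B →
        P A ≠ 0 →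
        |(P (A ∩ B)).toReal / (P A).toReal - (P B).toReal| ≤ K * ρ ^ (n - 1) := by
  classical
  obtain ⟨c, ρ, hc_pos, hρ_pos, hρ_lt, hgb⟩ := Stmt8.geom_bound M hp hπ hV0 hprim
  set card : ℝ := (Fintype.card 𝒱 : ℝ) with hcard
  have hcard_nonneg : 0 ≤ card := by positivity
  refine ⟨max (card * c / ρ) 1, lt_of_lt_of_le one_pos (le_max_right _ _),
    ρ, ⟨hρ_pos.le, hρ_lt⟩, ?_⟩
  intro k n hk hn A B hA hB hPA
  set K : ℝ := max (card * c / ρ) 1 with hK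
  have hK1 : (1:ℝ) ≤ K := le_max_right _ _
  -- basic real quantities
  have hα_pos : 0 < (P A).toReal := ENNReal.toReal_pos hPA (measure_ne_top _ _)
  have hx_le : (P (A ∩ B)).toReal ≤ (P A).toReal :=
    ENNReal.toReal_mono (measure_ne_top _ _) (measure_mono inter_subset_left)
  have hx_nonneg : 0 ≤ (P (A ∩ B)).toReal := ENNReal.toReal_nonneg
  have hPB_nonneg : 0 ≤ (P B).toReal := ENNReal.toReal_nonneg
  have hPB_le_one : (P B).toReal ≤ 1 := by
    have h1 : P B ≤ 1 := prob_le_one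
    calc (P B).toReal ≤ (1 : ENNReal).toReal := ENNReal.toReal_mono ENNReal.one_ne_top h1
      _ = 1 := by simp
  have htriv : |(P (A ∩ B)).toReal / (P A).toReal - (P B).toReal| ≤ 1 := by
    rw [abs_le]
    constructor
    · have h1 : 0 ≤ (P (A ∩ B)).toReal / (P A).toReal := by positivity
      linarith
    · have h1 : (P (A ∩ B)).toReal / (P A).toReal ≤ 1 :=
        (div_le_one hα_pos).mpr hx_le
      linarith
  rcases Nat.lt_or_ge n 2 with hn2 | hn2
  · -- n = 1 : trivial bound
    have hn1 : n - 1 = 0 := by omega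
    rw [hn1, pow_zero, mul_one]
    exact htriv.trans hK1
  -- main case : n ≥ 2
  set m : ℕ := k + n - 2 with hm
  have hkm : k ≤ m := by omega
  -- transfer A's measurability to the history σ-algebra at time k
  have hAk : MeasurableSet[Stmt8.hist M k] A := by
    set outerA : (Fin (k + 1) → 𝒱 × ℝ) → Fin k → ℝ :=
      fun g j => f (g j.castSucc).1 ((g j.succ).2 - (g j.castSucc).2) with houterA_def
    have houterA : Measurable outerA := by
      refine measurable_pi_lambda _ fun j => ?_
      exact hf.comp ((measurable_fst.comp (measurable_pi_apply _)).prodMk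
        ((measurable_snd.comp (measurable_pi_apply _)).sub
          (measurable_snd.comp (measurable_pi_apply _))))
    have heq : (fun ω => fun j : Fin k =>
        f (M.V (j : ℕ) ω) (M.S ((j : ℕ) + 1) ω - M.S (j : ℕ) ω))
        = outerA ∘ (fun ω => fun i : Fin (k + 1) => (M.V i ω, M.S i ω)) := by
      funext ω
      funext j
      simp only [houterA_def, Function.comp_apply, Fin.coe_castSucc, Fin.val_succ]
    rw [heq, ← MeasurableSpace.comap_comp] at hA
    exact (MeasurableSpace.comap_mono houterA.comap_le) _ hA
  have hAmeas : MeasurableSet A := (Stmt8.hist_le M k) _ hAk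
  -- transfer B's measurability to the future σ-algebra from time m
  obtain ⟨C, hCm, hCpre⟩ : ∃ C : Set (ℕ → 𝒱 × ℝ), MeasurableSet C
      ∧ Stmt8.Psi M m ⁻¹' C = B := by
    set outerB : (ℕ → 𝒱 × ℝ) → ℕ → ℝ := fun g j => f (g j).1 (g (j + 1)).2
      with houterB_def
    have houterB : Measurable outerB := by
      refine measurable_pi_lambda _ fun j => ?_
      exact hf.comp (Measurable.prodMk
        (measurable_fst.comp (measurable_pi_apply (X := fun _ : ℕ => 𝒱 × ℝ) j))
        (measurable_snd.comp (measurable_pi_apply (X := fun _ : ℕ => 𝒱 × ℝ) (j + 1))))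
    have heq : (fun ω => fun j : ℕ =>
        f (M.V (k + n - 1 + j) ω) (M.S (k + n + j) ω - M.S (k + n - 1 + j) ω))
        = outerB ∘ Stmt8.Psi M m := by
      funext ω
      funext j
      show f (M.V (k + n - 1 + j) ω) (M.S (k + n + j) ω - M.S (k + n - 1 + j) ω)
        = f (M.V (m + 1 + j) ω) (M.S (m + 1 + (j + 1)) ω - M.S (m + (j + 1)) ω)
      rw [show m + 1 + j = k + n - 1 + j by omega,
        show m + 1 + (j + 1) = k + n + j by omega,
        show m + (j + 1) = k + n - 1 + j by omega]
    rw [heq, ← MeasurableSpace.comap_comp] at hB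
    exact (MeasurableSpace.comap_mono houterB.comap_le) _ hB
  have hBmeas : MeasurableSet B := hCpre ▸ (Stmt8.measurable_Psi M m) hCm
  -- the conditional independence identities
  have hmain : ∀ (v : 𝒱) (A' : Set Ω), MeasurableSet[Stmt8.hist M m] A' →
      A' ⊆ {ω | M.V m ω = v} →
      ENNReal.ofReal (π v) * P (A' ∩ B)
        = P A' * P ({ω | M.V 0 ω = v} ∩ Stmt8.Psi M 0 ⁻¹' C) := by
    intro v A' hA'm hA'sub
    rw [← hCpre]
    exact Stmt8.claimH M hp hπ hV0 hCm m v A' hA'm hA'sub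
  set β : 𝒱 → ENNReal := fun v => P ({ω | M.V 0 ω = v} ∩ Stmt8.Psi M 0 ⁻¹' C) with hβdef
  set g : 𝒱 → ℝ := fun v => (β v).toReal / π v with hgdef
  have hπpos : ∀ v, 0 < π v := hπ.1
  have hg_nonneg : ∀ v, 0 ≤ g v := by
    intro v
    simp only [hgdef]
    exact div_nonneg ENNReal.toReal_nonneg (hπpos v).le
  have hg_le_one : ∀ v, g v ≤ 1 := by
    intro v
    simp only [hgdef]
    rw [div_le_one (hπpos v)]
    calc (β v).toReal ≤ (P {ω | M.V 0 ω = v}).toReal :=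
        ENNReal.toReal_mono (measure_ne_top _ _) (measure_mono inter_subset_left)
      _ = π v := hV0 v
  -- conditional probability formula, real version
  have hcond : ∀ (A' : Set Ω), MeasurableSet[Stmt8.hist M m] A' →
      ∀ v, A' ⊆ {ω | M.V m ω = v} →
      (P (A' ∩ B)).toReal = (P A').toReal * g v := by
    intro A' hA'm v hA'sub
    have h1 := hmain v A' hA'm hA'sub
    have h2 : π v * (P (A' ∩ B)).toReal = (P A').toReal * (β v).toReal := by
      have := congrArg ENNReal.toReal h1
      rwa [ENNReal.toReal_mul, ENNReal.toReal_mul,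
        ENNReal.toReal_ofReal (hπpos v).le] at this
    simp only [hgdef]
    rw [← mul_div_assoc, ← h2, mul_div_cancel_left₀ _ (hπpos v).ne']
  -- P(B ∩ {V m = v}) = β v
  have hβv : ∀ v, (P ({ω | M.V m ω = v} ∩ B)).toReal = π v * g v := by
    intro v
    have h1 := hcond {ω | M.V m ω = v} (Stmt8.measurableSet_V_eq M le_rfl v) v
      (fun _ h => h)
    rw [h1]
    have h2 : (P {ω | M.V m ω = v}).toReal = π v := by
      rw [Stmt8.PV M hp hπ hV0 m v, ENNReal.toReal_ofReal (hπpos v).le]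
    rw [h2]
  -- decomposition of P B
  have hPB : (P B).toReal = ∑ v, π v * g v := by
    have h1 := Stmt8.partition_V M m B hBmeas
    have h2 := congrArg ENNReal.toReal h1
    rw [ENNReal.toReal_sum (fun v _ => measure_ne_top _ _)] at h2
    rw [h2]
    refine Finset.sum_congr rfl fun v _ => ?_
    rw [← hβv v, Set.inter_comm]
  -- decomposition of P (A ∩ B)
  have hx : (P (A ∩ B)).toReal = ∑ v, (P (A ∩ {ω | M.V m ω = v})).toReal * g v := by
    have h1 := Stmt8.partition_V M m (A ∩ B) (hAmeas.inter hBmeas)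
    have h2 := congrArg ENNReal.toReal h1
    rw [ENNReal.toReal_sum (fun v _ => measure_ne_top _ _)] at h2
    rw [h2]
    refine Finset.sum_congr rfl fun v _ => ?_
    have h3 : A ∩ B ∩ {ω | M.V m ω = v} = (A ∩ {ω | M.V m ω = v}) ∩ B := by
      ext ω
      simp only [mem_inter_iff, mem_setOf_eq]
      tauto
    rw [h3]
    exact hcond _ (((Stmt8.hist_mono M hkm) _ hAk).inter
      (Stmt8.measurableSet_V_eq M le_rfl v)) v (fun ω h => h.2)
  -- decomposition of P(A ∩ {V m = v}) through time k
  set b : 𝒱 → ℝ := fun u => (P (A ∩ {ω | M.V k ω = u})).toReal with hbdef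
  have hb_nonneg : ∀ u, 0 ≤ b u := fun u => ENNReal.toReal_nonneg
  have hbsum : ∑ u, b u = (P A).toReal := by
    have h1 := Stmt8.partition_V M k A hAmeas
    have h2 := congrArg ENNReal.toReal h1
    rw [ENNReal.toReal_sum (fun v _ => measure_ne_top _ _)] at h2
    rw [hbdef, ← h2]
  set q : 𝒱 → 𝒱 → ℝ := fun u v => ((Matrix.of p) ^ (n - 2)) u v with hqdef
  have hq_nonneg : ∀ u v, 0 ≤ q u v := fun u v =>
    Stmt8.matpow_nonneg M hp hπ hV0 (n - 2) u v
  have hqb : ∀ u v, |q u v - π v| ≤ c * ρ ^ (n - 2) := fun u v => hgb (n - 2) u v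
  have hPAv : ∀ v, (P (A ∩ {ω | M.V m ω = v})).toReal = ∑ u, b u * q u v := by
    intro v
    have h1 := Stmt8.partition_V M k (A ∩ {ω | M.V m ω = v})
      (hAmeas.inter ((Stmt8.hist_le M m) _ (Stmt8.measurableSet_V_eq M le_rfl v)))
    have h2 := congrArg ENNReal.toReal h1
    rw [ENNReal.toReal_sum (fun v _ => measure_ne_top _ _)] at h2
    rw [h2]
    refine Finset.sum_congr rfl fun u _ => ?_
    have h3 : A ∩ {ω | M.V m ω = v} ∩ {ω | M.V k ω = u}
        = (A ∩ {ω | M.V k ω = u}) ∩ {ω | M.V m ω = v} := by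
      ext ω
      simp only [mem_inter_iff, mem_setOf_eq]
      tauto
    rw [h3]
    have h4 := Stmt8.multiStep M hp hπ hV0 (n - 2)
      (m := k) (w := u) (A := A ∩ {ω | M.V k ω = u})
      (hAk.inter (Stmt8.measurableSet_V_eq M le_rfl u)) (fun ω h => h.2) v
    rw [show k + (n - 2) = m by omega] at h4
    have h5 := congrArg ENNReal.toReal h4
    rw [ENNReal.toReal_mul, ENNReal.toReal_ofReal (hq_nonneg u v)] at h5
    exact h5
  -- the key algebraic identity
  set α : ℝ := (P A).toReal with hαdef
  have hT : (P (A ∩ B)).toReal - α * (P B).toReal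
      = ∑ v, ∑ u, b u * (q u v - π v) * g v := by
    have h1 : ∑ v, ∑ u, b u * (q u v - π v) * g v
        = ∑ v, ((∑ u, b u * q u v) * g v) - ∑ v, ((∑ u, b u) * (π v * g v)) := by
      rw [← Finset.sum_sub_distrib]
      refine Finset.sum_congr rfl fun v _ => ?_
      rw [Finset.sum_mul, Finset.sum_mul, ← Finset.sum_sub_distrib]
      refine Finset.sum_congr rfl fun u _ => by ring
    rw [h1, hbsum, hx, hPB, Finset.mul_sum]
    refine congrArg₂ (· - ·) (Finset.sum_congr rfl fun v _ => by rw [hPAv v]) ?_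
    exact Finset.sum_congr rfl fun v _ => by ring
  have hTbound : |(P (A ∩ B)).toReal - α * (P B).toReal|
      ≤ card * (c * ρ ^ (n - 2)) * α := by
    rw [hT]
    refine (Finset.abs_sum_le_sum_abs _ _).trans ?_
    have hterm : ∀ v, |∑ u, b u * (q u v - π v) * g v| ≤ (c * ρ ^ (n - 2)) * α := by
      intro v
      refine (Finset.abs_sum_le_sum_abs _ _).trans ?_
      have h2 : ∀ u, |b u * (q u v - π v) * g v| ≤ b u * (c * ρ ^ (n - 2)) := by
        intro u
        rw [abs_mul, abs_mul, abs_of_nonneg (hb_nonneg u), abs_of_nonneg (hg_nonneg v)]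
        calc b u * |q u v - π v| * g v ≤ b u * (c * ρ ^ (n - 2)) * 1 := by
              refine mul_le_mul (mul_le_mul le_rfl (hqb u v) (abs_nonneg _)
                (hb_nonneg u)) (hg_le_one v) (hg_nonneg v) ?_
              positivity
          _ = b u * (c * ρ ^ (n - 2)) := by ring
      calc ∑ u, |b u * (q u v - π v) * g v| ≤ ∑ u, b u * (c * ρ ^ (n - 2)) :=
            Finset.sum_le_sum fun u _ => h2 u
        _ = (∑ u, b u) * (c * ρ ^ (n - 2)) := by rw [Finset.sum_mul]
        _ = (c * ρ ^ (n - 2)) * α := by rw [hbsum]; ring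
    calc ∑ v, |∑ u, b u * (q u v - π v) * g v|
        ≤ ∑ v : 𝒱, (c * ρ ^ (n - 2)) * α := Finset.sum_le_sum fun v _ => hterm v
      _ = card * (c * ρ ^ (n - 2)) * α := by
          rw [Finset.sum_const, nsmul_eq_mul, Finset.card_univ, hcard]
          ring
  -- conclude
  have hdiv : |(P (A ∩ B)).toReal / α - (P B).toReal| ≤ card * (c * ρ ^ (n - 2)) := by
    have h1 : (P (A ∩ B)).toReal / α - (P B).toReal
        = ((P (A ∩ B)).toReal - α * (P B).toReal) / α := by
      field_simp
    rw [h1, abs_div, abs_of_pos hα_pos, div_le_iff₀ hα_pos]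
    exact hTbound
  refine hdiv.trans ?_
  have hexp : ρ ^ (n - 1) = ρ ^ (n - 2) * ρ := by
    rw [← pow_succ]
    congr 1
    omega
  have hKge : card * c / ρ ≤ K := le_max_left _ _
  have h2 : card * (c * ρ ^ (n - 2)) = (card * c / ρ) * ρ ^ (n - 1) := by
    rw [hexp]
    field_simp
  rw [h2]
  exact mul_le_mul_of_nonneg_right hKge (by positivity)
end
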